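/- The matrix EM is diagonalizable over ℝ; all of its eigenvalues are real; the eigenvalue 1 has algebraic multiplicity 4; every eigenvalue λ ≠ 1 of EM satisfies −1 < λ < 1; and the eigenspace {x ∈ ℝ⁹ : EM·x = x} equals span{v₁⊗v₁₂, v₁⊗v₁₃, v₁₂⊗v₁₂, v₁₃⊗v₁₃}. -/

import Mathlib

open Matrix

/-- The 9×9 real block-diagonal matrix `EM = diag(B₁, B₂, B₃)` with
`B₁ = (1/4)·[[3,1,1],[1,3,−1],[1,−1,3]]`, `B₂ = (1/4)·[[1,3,0],[3,1,0],[−1,1,0]]`,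
`B₃ = (1/4)·[[1,0,3],[−1,0,1],[3,0,1]]`. -/
noncomputable def EM : Matrix (Fin 9) (Fin 9) ℝ :=
  (1 / 4 : ℝ) •
    !![3, 1, 1, 0, 0, 0, 0, 0, 0;
       1, 3, -1, 0, 0, 0, 0, 0, 0;
       1, -1, 3, 0, 0, 0, 0, 0, 0;
       0, 0, 0, 1, 3, 0, 0, 0, 0;
       0, 0, 0, 3, 1, 0, 0, 0, 0;
       0, 0, 0, -1, 1, 0, 0, 0, 0;
       0, 0, 0, 0, 0, 0, 1, 0, 3;
       0, 0, 0, 0, 0, 0, -1, 0, 1;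
       0, 0, 0, 0, 0, 0, 3, 0, 1]

/-- The identification `ℝ³ ⊗ ℝ³ ≅ ℝ⁹` sending `e_i ⊗ e_j` to `e_{3(i−1)+j}` (0-indexed:
`e_i ⊗ e_j ↦ e_{3i+j}`): the tensor product of two vectors `u, v ∈ ℝ³` as a vector in `ℝ⁹`. -/
def tensor2 (u v : Fin 3 → ℝ) : Fin 9 → ℝ :=
  fun k => u ⟨k.val / 3, by omega⟩ * v ⟨k.val % 3, by omega⟩

def v1 : Fin 3 → ℝ := ![1, 0, 0]
def v12 : Fin 3 → ℝ := ![1, 1, 0]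
def v13 : Fin 3 → ℝ := ![1, 0, 1]

namespace Stmt11Aux

open Polynomial

noncomputable def Pm : Matrix (Fin 9) (Fin 9) ℝ :=
  !![1,1,1,0,0,0,0,0,0;
     1,0,-1,0,0,0,0,0,0;
     0,1,-1,0,0,0,0,0,0;
     0,0,0,1,1,0,0,0,0;
     0,0,0,1,-1,0,0,0,0;
     0,0,0,0,1,1,0,0,0;
     0,0,0,0,0,0,1,1,0;
     0,0,0,0,0,0,0,1,1;
     0,0,0,0,0,0,1,-1,0]

noncomputable def Qm : Matrix (Fin 9) (Fin 9) ℝ :=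
  !![1/3,2/3,-1/3,0,0,0,0,0,0;
     1/3,-1/3,2/3,0,0,0,0,0,0;
     1/3,-1/3,-1/3,0,0,0,0,0,0;
     0,0,0,1/2,1/2,0,0,0,0;
     0,0,0,1/2,-1/2,0,0,0,0;
     0,0,0,-1/2,1/2,1,0,0,0;
     0,0,0,0,0,0,1/2,0,1/2;
     0,0,0,0,0,0,1/2,0,-1/2;
     0,0,0,0,0,0,-1/2,1,1/2]

noncomputable def dv : Fin 9 → ℝ := ![1,1,1/4,1,-1/2,0,1,-1/2,0]

noncomputable def Dm : Matrix (Fin 9) (Fin 9) ℝ := Matrix.diagonal dv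

set_option maxHeartbeats 2000000 in
lemma hPQ : Pm * Qm = 1 := by
  ext i j
  fin_cases i <;> fin_cases j <;>
    norm_num [Pm, Qm, Matrix.mul_apply, Fin.sum_univ_succ, Matrix.one_apply,
      Matrix.cons_val_succ', Matrix.cons_val_zero, Fin.ext_iff]

set_option maxHeartbeats 2000000 in
lemma hEMP : EM * Pm = Pm * Dm := by
  ext i j
  fin_cases i <;> fin_cases j <;>
    simp [EM, Pm, Dm, dv, Matrix.mul_apply, Fin.sum_univ_succ, Matrix.diagonal_apply] <;> norm_num

lemma hEMfact : EM = Pm * Dm * Qm := by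
  rw [← hEMP, Matrix.mul_assoc, hPQ, Matrix.mul_one]

lemma charpoly_conj {n : Type*} [Fintype n] [DecidableEq n] {R : Type*} [CommRing R]
    (P D Q : Matrix n n R) (h : P * Q = 1) : (P * D * Q).charpoly = D.charpoly := by
  have h2 : P.map (Polynomial.C : R → R[X]) * Q.map Polynomial.C = 1 := by
    rw [← Matrix.map_mul, h, Matrix.map_one _ (map_zero Polynomial.C) (map_one Polynomial.C)]
  have hcomm : P.map Polynomial.C * Matrix.scalar n (X : R[X])
      = Matrix.scalar n (X : R[X]) * P.map Polynomial.C :=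
    (Matrix.scalar_commute (X : R[X]) (fun r' => Commute.all _ _) _).symm
  have hch : charmatrix (P * D * Q) = P.map Polynomial.C * charmatrix D * Q.map Polynomial.C := by
    unfold charmatrix
    simp only [RingHom.mapMatrix_apply]
    rw [mul_sub, sub_mul, hcomm, Matrix.mul_assoc (Matrix.scalar n X), h2, Matrix.mul_one,
      Matrix.map_mul, Matrix.map_mul]
  have h3 : Q.map (Polynomial.C : R → R[X]) * P.map Polynomial.C = 1 := by
    rw [← Matrix.map_mul, _root_.mul_eq_one_comm.mp h,
      Matrix.map_one _ (map_zero Polynomial.C) (map_one Polynomial.C)]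
  rw [Matrix.charpoly, hch, Matrix.det_mul, Matrix.det_mul, mul_comm, ← mul_assoc,
    ← Matrix.det_mul, h3, Matrix.det_one, one_mul]
  rfl

lemma prod9 {M : Type*} [CommMonoid M] (f : Fin 9 → M) :
    ∏ i, f i = f ⟨0, by omega⟩ * (f ⟨1, by omega⟩ * (f ⟨2, by omega⟩ * (f ⟨3, by omega⟩ *
      (f ⟨4, by omega⟩ * (f ⟨5, by omega⟩ * (f ⟨6, by omega⟩ *
      (f ⟨7, by omega⟩ * f ⟨8, by omega⟩))))))) := by
  simp only [Fin.prod_univ_succ, Fin.prod_univ_zero, mul_one]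
  rfl

lemma sum9 {M : Type*} [AddCommMonoid M] (f : Fin 9 → M) :
    ∑ i, f i = f ⟨0, by omega⟩ + (f ⟨1, by omega⟩ + (f ⟨2, by omega⟩ + (f ⟨3, by omega⟩ +
      (f ⟨4, by omega⟩ + (f ⟨5, by omega⟩ + (f ⟨6, by omega⟩ +
      (f ⟨7, by omega⟩ + f ⟨8, by omega⟩))))))) := by
  simp only [Fin.sum_univ_succ, Fin.sum_univ_zero, add_zero]
  rfl

lemma hcp : EM.charpoly = ∏ i, (X - C (dv i)) := by
  rw [hEMfact, charpoly_conj _ _ _ hPQ]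
  exact Matrix.charpoly_of_upperTriangular Dm (Matrix.blockTriangular_diagonal dv)

noncomputable def q : ℝ[X] := (X - C (1/4 : ℝ)) * (X + C (1/2 : ℝ))^2 * X^2

lemma hcp2 : EM.charpoly = (X - C (1:ℝ))^4 * q := by
  rw [hcp, prod9, q]
  show (X - C (1:ℝ)) * ((X - C (1:ℝ)) * ((X - C (1/4:ℝ)) * ((X - C (1:ℝ)) *
    ((X - C (-1/2:ℝ)) * ((X - C (0:ℝ)) * ((X - C (1:ℝ)) *
    ((X - C (-1/2:ℝ)) * (X - C (0:ℝ))))))))) = _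
  have h0 : (C (0:ℝ)) = 0 := map_zero _
  have h1 : (C (1:ℝ)) = 1 := map_one _
  have hneg : (C (-1/2 : ℝ)) = -C (1/2 : ℝ) := by rw [neg_div, map_neg]
  rw [h0, h1, hneg]
  ring

lemma hq1 : q.eval 1 ≠ 0 := by
  norm_num [q]

lemma hqne : q ≠ 0 := fun h => hq1 (by simp [h])

lemma hrm : EM.charpoly.rootMultiplicity 1 = 4 := by
  have := Polynomial.rootMultiplicity_mul
    (x := (1:ℝ)) (mul_ne_zero (pow_ne_zero 4 (Polynomial.X_sub_C_ne_zero (1:ℝ))) hqne)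
  rw [hcp2, this, Polynomial.rootMultiplicity_X_sub_C_pow,
    Polynomial.rootMultiplicity_eq_zero hq1]

lemma hcpC : (EM.map (Complex.ofReal)).charpoly =
    (X - C (1:ℂ))^4 * ((X - C (1/4 : ℂ)) * (X + C (1/2 : ℂ))^2 * X^2) := by
  have h1 : EM.map (Complex.ofReal) = EM.map (Complex.ofRealHom : ℝ →+* ℂ) := rfl
  rw [h1, Matrix.charpoly_map, hcp2, q]
  simp only [Polynomial.map_mul, Polynomial.map_pow, Polynomial.map_sub, Polynomial.map_add,
    Polynomial.map_X, Polynomial.map_C]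
  norm_num

lemma root_cases (μ : ℂ) (h : ((EM.map (Complex.ofReal)).charpoly).IsRoot μ) :
    μ = ((1:ℝ):ℂ) ∨ μ = ((1/4:ℝ):ℂ) ∨ μ = ((-1/2:ℝ):ℂ) ∨ μ = ((0:ℝ):ℂ) := by
  have h' : (μ - 1)^4 * ((μ - 1/4) * (μ + 1/2)^2 * μ^2) = 0 := by
    have := h
    rw [hcpC] at this
    simpa [Polynomial.IsRoot, Polynomial.eval_mul, Polynomial.eval_pow] using this
  rcases mul_eq_zero.mp h' with h1 | h1
  · left
    have := pow_eq_zero_iff (n := 4) (by norm_num) |>.mp h1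
    push_cast
    linear_combination this
  rcases mul_eq_zero.mp h1 with h2 | h2
  · rcases mul_eq_zero.mp h2 with h3 | h3
    · right; left; push_cast; linear_combination h3
    · right; right; left
      have := pow_eq_zero_iff (n := 2) (by norm_num) |>.mp h3
      push_cast
      linear_combination this
  · right; right; right
    have := pow_eq_zero_iff (n := 2) (by norm_num) |>.mp h2
    push_cast
    linear_combination this

-- the four generators as explicit vectors
lemma hg1 : tensor2 v1 v12 = ![1,1,0,0,0,0,0,0,0] := by
  funext k; fin_cases k <;> norm_num [tensor2, v1, v12, Matrix.cons_val_succ', Matrix.cons_val_zero]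

lemma hg2 : tensor2 v1 v13 = ![1,0,1,0,0,0,0,0,0] := by
  funext k; fin_cases k <;> norm_num [tensor2, v1, v13, Matrix.cons_val_succ', Matrix.cons_val_zero]

lemma hg3 : tensor2 v12 v12 = ![1,1,0,1,1,0,0,0,0] := by
  funext k; fin_cases k <;> norm_num [tensor2, v12, Matrix.cons_val_succ', Matrix.cons_val_zero]

lemma hg4 : tensor2 v13 v13 = ![1,0,1,0,0,0,1,0,1] := by
  funext k; fin_cases k <;> norm_num [tensor2, v13, Matrix.cons_val_succ', Matrix.cons_val_zero]

set_option maxHeartbeats 1000000 in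
lemma hE1 : EM.mulVec (tensor2 v1 v12) = tensor2 v1 v12 := by
  rw [hg1]; funext i
  fin_cases i <;>
    norm_num [EM, Matrix.mulVec, dotProduct, Fin.sum_univ_succ,
      Matrix.cons_val_succ', Matrix.cons_val_zero]

set_option maxHeartbeats 1000000 in
lemma hE2 : EM.mulVec (tensor2 v1 v13) = tensor2 v1 v13 := by
  rw [hg2]; funext i
  fin_cases i <;>
    norm_num [EM, Matrix.mulVec, dotProduct, Fin.sum_univ_succ,
      Matrix.cons_val_succ', Matrix.cons_val_zero]

set_option maxHeartbeats 1000000 in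
lemma hE3 : EM.mulVec (tensor2 v12 v12) = tensor2 v12 v12 := by
  rw [hg3]; funext i
  fin_cases i <;>
    norm_num [EM, Matrix.mulVec, dotProduct, Fin.sum_univ_succ,
      Matrix.cons_val_succ', Matrix.cons_val_zero]

set_option maxHeartbeats 1000000 in
lemma hE4 : EM.mulVec (tensor2 v13 v13) = tensor2 v13 v13 := by
  rw [hg4]; funext i
  fin_cases i <;>
    norm_num [EM, Matrix.mulVec, dotProduct, Fin.sum_univ_succ,
      Matrix.cons_val_succ', Matrix.cons_val_zero]

end Stmt11Aux

set_option maxHeartbeats 4000000 in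
/-- `EM` is diagonalizable over `ℝ`; all its eigenvalues are real; the eigenvalue
`1` has algebraic multiplicity `4`; every eigenvalue `λ ≠ 1` satisfies `−1 < λ < 1`; and the
eigenspace `{x : EM·x = x}` equals `span{v₁⊗v₁₂, v₁⊗v₁₃, v₁₂⊗v₁₂, v₁₃⊗v₁₃}`. -/
theorem stmt11 :
    (∃ P D : Matrix (Fin 9) (Fin 9) ℝ, IsUnit P ∧ D.IsDiag ∧ EM = P * D * P⁻¹) ∧
    (∀ μ : ℂ, ((EM.map (Complex.ofReal)).charpoly).IsRoot μ → μ.im = 0) ∧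
    (EM.charpoly.rootMultiplicity 1 = 4) ∧
    (∀ μ : ℂ, ((EM.map (Complex.ofReal)).charpoly).IsRoot μ → μ ≠ 1 →
      -1 < μ.re ∧ μ.re < 1) ∧
    ({x : Fin 9 → ℝ | EM.mulVec x = x} =
      ↑(Submodule.span ℝ
        {tensor2 v1 v12, tensor2 v1 v13, tensor2 v12 v12, tensor2 v13 v13})) := by
  refine ⟨?_, ?_, Stmt11Aux.hrm, ?_, ?_⟩
  · exact ⟨Stmt11Aux.Pm, Stmt11Aux.Dm, IsUnit.of_mul_eq_one _ Stmt11Aux.hPQ,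
      Matrix.isDiag_diagonal Stmt11Aux.dv,
      by rw [Matrix.inv_eq_right_inv Stmt11Aux.hPQ]; exact Stmt11Aux.hEMfact⟩
  · intro μ h
    rcases Stmt11Aux.root_cases μ h with h | h | h | h <;>
      rw [h, Complex.ofReal_im]
  · intro μ h hne
    rcases Stmt11Aux.root_cases μ h with h | h | h | h
    · exact absurd (by rw [h]; norm_num) hne
    all_goals rw [h, Complex.ofReal_re]; constructor <;> norm_num
  · ext x
    simp only [Set.mem_setOf_eq, SetLike.mem_coe]
    constructor
    · intro hx
      have e0 := congrFun hx ⟨0, by omega⟩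
      have e3 := congrFun hx ⟨3, by omega⟩
      have e4 := congrFun hx ⟨4, by omega⟩
      have e5 := congrFun hx ⟨5, by omega⟩
      have e6 := congrFun hx ⟨6, by omega⟩
      have e7 := congrFun hx ⟨7, by omega⟩
      have e8 := congrFun hx ⟨8, by omega⟩
      rw [Matrix.mulVec, dotProduct, Stmt11Aux.sum9] at e0 e3 e4 e5 e6 e7 e8
      norm_num [EM, Matrix.smul_apply, Matrix.cons_val_zero, Matrix.cons_val_succ']
        at e0 e3 e4 e5 e6 e7 e8
      have hxeq : x = (x ⟨1, by omega⟩ - x ⟨3, by omega⟩) • tensor2 v1 v12 +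
          ((x ⟨2, by omega⟩ - x ⟨6, by omega⟩) • tensor2 v1 v13 +
          (x ⟨3, by omega⟩ • tensor2 v12 v12 + x ⟨6, by omega⟩ • tensor2 v13 v13)) := by
        rw [Stmt11Aux.hg1, Stmt11Aux.hg2, Stmt11Aux.hg3, Stmt11Aux.hg4]
        funext k
        fin_cases k <;>
          norm_num [Pi.add_apply, Pi.smul_apply, smul_eq_mul,
            Matrix.cons_val_succ', Matrix.cons_val_zero] <;>
          linarith [e0, e3, e4, e5, e6, e7, e8]
      rw [hxeq]
      have m1 : tensor2 v1 v12 ∈ ({tensor2 v1 v12, tensor2 v1 v13, tensor2 v12 v12,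
          tensor2 v13 v13} : Set (Fin 9 → ℝ)) := by simp
      have m2 : tensor2 v1 v13 ∈ ({tensor2 v1 v12, tensor2 v1 v13, tensor2 v12 v12,
          tensor2 v13 v13} : Set (Fin 9 → ℝ)) := by simp
      have m3 : tensor2 v12 v12 ∈ ({tensor2 v1 v12, tensor2 v1 v13, tensor2 v12 v12,
          tensor2 v13 v13} : Set (Fin 9 → ℝ)) := by simp
      have m4 : tensor2 v13 v13 ∈ ({tensor2 v1 v12, tensor2 v1 v13, tensor2 v12 v12,
          tensor2 v13 v13} : Set (Fin 9 → ℝ)) := by simp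
      exact Submodule.add_mem _
        (Submodule.smul_mem _ _ (Submodule.subset_span m1))
        (Submodule.add_mem _
          (Submodule.smul_mem _ _ (Submodule.subset_span m2))
          (Submodule.add_mem _
            (Submodule.smul_mem _ _ (Submodule.subset_span m3))
            (Submodule.smul_mem _ _ (Submodule.subset_span m4))))
    · intro hy
      induction hy using Submodule.span_induction with
      | mem z hz =>
        simp only [Set.mem_insert_iff, Set.mem_singleton_iff] at hz
        rcases hz with h | h | h | h <;> subst h
        · exact Stmt11Aux.hE1
        · exact Stmt11Aux.hE2
        · exact Stmt11Aux.hE3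
        · exact Stmt11Aux.hE4
      | zero => simp
      | add a b _ _ ha hb => rw [Matrix.mulVec_add, ha, hb]
      | smul r a _ ha => rw [Matrix.mulVec_smul, ha]
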